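/- arXiv:1403.2578 — 4 statements merged into one kernel-verified Lean document; each statement's English description precedes it below -/
import Mathlib

section
/- Let H be the arcsine distribution on (−1,1), let y > 0, and define ψ(u) = −1/u + y ∫ t/(1 + t u) dH(t). Then for every real u with 0 < |u| < 1, ψ(u) = (y−1)/u − y/(u √(1 − u²)). -/
open Real

open Set

lemma onePlusMul_pos {u t : ℝ} (hu : |u| < 1) (ht : |t| ≤ 1) : 0 < 1 + t * u := by
  have h : |t * u| < 1 := by
    rw [abs_mul]
    calc |t| * |u| ≤ 1 * |u| := by nlinarith [abs_nonneg u]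
    _ < 1 := by simpa using hu
  have := (abs_lt.mp h).1
  linarith

lemma integrand_integrable (u : ℝ) (hu1 : |u| < 1) :
    IntervalIntegrable (fun t => t / ((1 + t * u) * (π * Real.sqrt (1 - t ^ 2))))
      MeasureTheory.volume (-1 : ℝ) 1 := by
  set C : ℝ := 1 / ((1 - |u|) * π) with hC
  have hCpos : 0 < C := by
    apply div_pos one_pos
    exact mul_pos (by linarith) pi_pos
  have hg : IntervalIntegrable
      (fun x : ℝ => C * ((1 - x) ^ (-(1/2) : ℝ) + (1 + x) ^ (-(1/2) : ℝ)))
      MeasureTheory.volume (-1 : ℝ) 1 := by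
    apply IntervalIntegrable.const_mul
    apply IntervalIntegrable.add
    · have h0 : IntervalIntegrable (fun x : ℝ => x ^ (-(1/2) : ℝ))
        MeasureTheory.volume 0 2 := intervalIntegral.intervalIntegrable_rpow' (by norm_num)
      have := h0.comp_sub_left 1
      have h2 : (1:ℝ) - 2 = -1 := by norm_num
      have h3 : (1:ℝ) - 0 = 1 := by norm_num
      rw [h2, h3] at this
      exact this.symm
    · have h0 : IntervalIntegrable (fun x : ℝ => x ^ (-(1/2) : ℝ))
        MeasureTheory.volume 0 2 := intervalIntegral.intervalIntegrable_rpow' (by norm_num)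
      have := h0.comp_add_left 1
      norm_num at this
      simpa [add_comm] using this
  apply hg.mono_fun'
  · apply Measurable.aestronglyMeasurable
    apply Measurable.div measurable_id
    apply Measurable.mul
    · exact (measurable_const.add (measurable_id.mul measurable_const))
    · exact measurable_const.mul ((measurable_const.sub (measurable_id.pow measurable_const)).sqrt)
  · rw [Filter.EventuallyLE, MeasureTheory.ae_restrict_iff' measurableSet_uIoc]
    apply MeasureTheory.ae_of_all
    intro x hx
    rw [uIoc_of_le (by norm_num : (-1:ℝ) ≤ 1)] at hx
    obtain ⟨hx1, hx2⟩ := hx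
    have h1x : (0:ℝ) < 1 + x := by linarith
    have h1x' : (0:ℝ) ≤ 1 - x := by linarith
    have hrw1 : (1 - x) ^ (-(1/2) : ℝ) = 1 / Real.sqrt (1 - x) := by
      rw [Real.rpow_neg h1x', ← Real.sqrt_eq_rpow, one_div]
    have hrw2 : (1 + x) ^ (-(1/2) : ℝ) = 1 / Real.sqrt (1 + x) := by
      rw [Real.rpow_neg h1x.le, ← Real.sqrt_eq_rpow, one_div]
    rw [hrw1, hrw2]
    rcases eq_or_lt_of_le hx2 with h | h
    · have h0 : Real.sqrt (1 - x ^ 2) = 0 := by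
        rw [← h]; simp [Real.sqrt_eq_zero']
        nlinarith
      have : x / ((1 + x * u) * (π * Real.sqrt (1 - x ^ 2))) = 0 := by
        rw [h0]; simp
      rw [this, norm_zero]
      have hs2 : (0:ℝ) ≤ 1 / Real.sqrt (1 - x) := by positivity
      have hs3 : (0:ℝ) ≤ 1 / Real.sqrt (1 + x) := by positivity
      positivity
    · have ha : (0:ℝ) < Real.sqrt (1 - x ^ 2) := Real.sqrt_pos.mpr (by nlinarith)
      have hsx : (0:ℝ) < Real.sqrt (1 - x) := Real.sqrt_pos.mpr (by linarith)
      have hsx' : (0:ℝ) < Real.sqrt (1 + x) := Real.sqrt_pos.mpr h1x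
      have hc : (0:ℝ) < 1 + x * u := onePlusMul_pos hu1 (abs_le.mpr ⟨by linarith, by linarith⟩)
      have hcu : 1 - |u| ≤ 1 + x * u := by
        have h1 : |x * u| ≤ |u| := by
          rw [abs_mul]
          nlinarith [abs_nonneg u, abs_le.mpr (⟨hx1.le, hx2⟩ : -1 ≤ x ∧ x ≤ 1)]
        have h2 := (abs_le.mp h1).1
        linarith
      have hsq : Real.sqrt (1 - x ^ 2) = Real.sqrt (1 - x) * Real.sqrt (1 + x) := by
        rw [← Real.sqrt_mul (by linarith : (0:ℝ) ≤ 1 - x)]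
        congr 1; ring
      have key : 1 / Real.sqrt (1 - x ^ 2) ≤ 1 / Real.sqrt (1 - x) + 1 / Real.sqrt (1 + x) := by
        rcases le_or_gt 0 x with hx0 | hx0
        · have h1 : (1:ℝ) ≤ Real.sqrt (1 + x) := Real.one_le_sqrt.mpr (by linarith)
          have h2 : Real.sqrt (1 - x) ≤ Real.sqrt (1 - x ^ 2) := by
            rw [hsq]; nlinarith
          have h3 := one_div_le_one_div_of_le hsx h2
          have h4 : (0:ℝ) ≤ 1 / Real.sqrt (1 + x) := by positivity
          linarith
        · have h1 : (1:ℝ) ≤ Real.sqrt (1 - x) := Real.one_le_sqrt.mpr (by linarith)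
          have h2 : Real.sqrt (1 + x) ≤ Real.sqrt (1 - x ^ 2) := by
            rw [hsq]; nlinarith
          have h3 := one_div_le_one_div_of_le hsx' h2
          have h4 : (0:ℝ) ≤ 1 / Real.sqrt (1 - x) := by positivity
          linarith
      have hnorm : ‖x / ((1 + x * u) * (π * Real.sqrt (1 - x ^ 2)))‖
          = |x| / ((1 + x * u) * (π * Real.sqrt (1 - x ^ 2))) := by
        rw [Real.norm_eq_abs, abs_div]
        congr 1
        rw [abs_of_pos (by positivity)]
      rw [hnorm]
      have step1 : |x| / ((1 + x * u) * (π * Real.sqrt (1 - x ^ 2)))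
          ≤ 1 / ((1 - |u|) * (π * Real.sqrt (1 - x ^ 2))) := by
        apply div_le_div₀ (by norm_num) (abs_le.mpr ⟨by linarith, by linarith⟩)
        · exact mul_pos (by linarith) (by positivity)
        · apply mul_le_mul_of_nonneg_right hcu (by positivity)
      have step2 : 1 / ((1 - |u|) * (π * Real.sqrt (1 - x ^ 2)))
          = C * (1 / Real.sqrt (1 - x ^ 2)) := by
        rw [hC]; field_simp
      have step3 := mul_le_mul_of_nonneg_left key hCpos.le
      calc |x| / ((1 + x * u) * (π * Real.sqrt (1 - x ^ 2)))
          ≤ 1 / ((1 - |u|) * (π * Real.sqrt (1 - x ^ 2))) := step1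
        _ = C * (1 / Real.sqrt (1 - x ^ 2)) := step2
        _ ≤ C * (1 / Real.sqrt (1 - x) + 1 / Real.sqrt (1 + x)) := step3

lemma arcsine_integral (u : ℝ) (hu0 : u ≠ 0) (hu1 : |u| < 1) :
    ∫ t in (-1:ℝ)..1, t / ((1 + t * u) * (π * Real.sqrt (1 - t ^ 2)))
      = (1 - 1 / Real.sqrt (1 - u ^ 2)) / u := by
  have hu2 : u ^ 2 < 1 := by nlinarith [sq_abs u, abs_nonneg u]
  have hb : (0:ℝ) < Real.sqrt (1 - u ^ 2) := Real.sqrt_pos.mpr (by linarith)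
  have hbsq : Real.sqrt (1 - u ^ 2) ^ 2 = 1 - u ^ 2 := Real.sq_sqrt (by linarith)
  set F : ℝ → ℝ := fun t =>
    (Real.arcsin t - (1 / Real.sqrt (1 - u ^ 2)) * Real.arcsin ((u + t) / (1 + u * t))) / (π * u)
    with hF
  have hcne : ∀ t ∈ Icc (-1:ℝ) 1, 1 + u * t ≠ 0 := by
    intro t ht
    have := onePlusMul_pos hu1 (abs_le.mpr ⟨ht.1, ht.2⟩)
    rw [mul_comm] at this
    linarith
  have hcont : ContinuousOn F (Icc (-1:ℝ) 1) := by
    apply ContinuousOn.div_const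
    apply ContinuousOn.sub Real.continuous_arcsin.continuousOn
    apply ContinuousOn.mul continuousOn_const
    apply Real.continuous_arcsin.comp_continuousOn
    exact ContinuousOn.div (by fun_prop) (by fun_prop) hcne
  have hderiv : ∀ t ∈ Ioo (-1:ℝ) 1,
      HasDerivAt F (t / ((1 + t * u) * (π * Real.sqrt (1 - t ^ 2)))) t := by
    intro t ht
    obtain ⟨ht1, ht2⟩ := ht
    have hc : (0:ℝ) < 1 + u * t := by
      have := onePlusMul_pos hu1 (abs_le.mpr ⟨ht1.le, ht2.le⟩)
      linarith [this, mul_comm t u]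
    have ht2' : t ^ 2 < 1 := by nlinarith
    have ha : (0:ℝ) < Real.sqrt (1 - t ^ 2) := Real.sqrt_pos.mpr (by linarith)
    have hasq : Real.sqrt (1 - t ^ 2) ^ 2 = 1 - t ^ 2 := Real.sq_sqrt (by linarith)
    have hg : HasDerivAt (fun s => (u + s) / (1 + u * s)) ((1 - u ^ 2) / (1 + u * t) ^ 2) t := by
      have h1 : HasDerivAt (fun s : ℝ => u + s) 1 t := (hasDerivAt_id t).const_add u
      have h2 : HasDerivAt (fun s : ℝ => 1 + u * s) u t := by
        simpa using ((hasDerivAt_id t).const_mul u).const_add 1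
      have h3 := h1.div h2 hc.ne'
      refine h3.congr_deriv (Eq.symm ?_)
      ring
    have hgt : 1 - ((u + t) / (1 + u * t)) ^ 2 = (1 - u ^ 2) * (1 - t ^ 2) / (1 + u * t) ^ 2 := by
      field_simp
      ring
    have hgtpos : 0 < 1 - ((u + t) / (1 + u * t)) ^ 2 := by
      rw [hgt]
      exact div_pos (mul_pos (by linarith) (by linarith)) (pow_pos hc 2)
    have hgne1 : (u + t) / (1 + u * t) ≠ 1 := by
      intro hh; rw [hh] at hgtpos; norm_num at hgtpos
    have hgne1' : (u + t) / (1 + u * t) ≠ -1 := by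
      intro hh; rw [hh] at hgtpos; norm_num at hgtpos
    have harc2 := (Real.hasDerivAt_arcsin hgne1' hgne1).comp t hg
    have harc1 := Real.hasDerivAt_arcsin ht1.ne' ht2.ne
    have hsqrtg : Real.sqrt (1 - ((u + t) / (1 + u * t)) ^ 2)
        = Real.sqrt (1 - u ^ 2) * Real.sqrt (1 - t ^ 2) / (1 + u * t) := by
      rw [hgt, show (1 - u ^ 2) * (1 - t ^ 2) / (1 + u * t) ^ 2
          = (Real.sqrt (1 - u ^ 2) * Real.sqrt (1 - t ^ 2) / (1 + u * t)) ^ 2 by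
        rw [div_pow, mul_pow, hbsq, hasq]]
      exact Real.sqrt_sq (by positivity)
    have hfinal := (harc1.sub (harc2.const_mul (1 / Real.sqrt (1 - u ^ 2)))).div_const (π * u)
    refine (hfinal : HasDerivAt F _ t).congr_deriv (Eq.symm ?_)
    rw [hsqrtg]
    rw [show (1:ℝ) - u ^ 2 = Real.sqrt (1 - u ^ 2) ^ 2 from hbsq.symm]
    have hc'' : (0:ℝ) < 1 + t * u := by rwa [mul_comm u t] at hc
    rw [div_eq_div_iff (mul_pos hc'' (mul_pos pi_pos ha)).ne' (mul_ne_zero pi_ne_zero hu0)]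
    field_simp
    rw [Real.sqrt_sq hb.le]
    ring
  have hint := integrand_integrable u hu1
  have heq := intervalIntegral.integral_eq_sub_of_hasDerivAt_of_le (by norm_num) hcont hderiv hint
  rw [heq, hF]
  have h1 : (u + 1) / (1 + u * 1) = 1 := by
    rw [mul_one]
    field_simp [show (1:ℝ) + u ≠ 0 by intro hh; rw [abs_lt] at hu1; linarith]
    ring
  have h2 : (u + -1) / (1 + u * -1) = -1 := by
    rw [abs_lt] at hu1
    have hne : (1:ℝ) - u ≠ 0 := by intro hh; nlinarith
    rw [show (1:ℝ) + u * -1 = 1 - u by ring, show u + -1 = -(1 - u) by ring, neg_div,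
      div_self hne]
  simp only [h1, h2, Real.arcsin_one, Real.arcsin_neg_one]
  field_simp
  ring

/-- With `H` the arcsine distribution on `(−1,1)` and `y > 0`, the
function `ψ(u) = −1/u + y ∫ t/(1 + tu) dH(t)` satisfies, for `0 < |u| < 1`,
`ψ(u) = (y−1)/u − y/(u √(1 − u²))`. -/
theorem psi_arcsine_formula (y : ℝ) (hy : 0 < y) (u : ℝ) (hu0 : 0 < |u|) (hu1 : |u| < 1) :
    -1 / u + y * ∫ t in (-1 : ℝ)..1, t / ((1 + t * u) * (π * Real.sqrt (1 - t ^ 2))) =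
      (y - 1) / u - y / (u * Real.sqrt (1 - u ^ 2)) := by
  have hu0' : u ≠ 0 := by
    intro h; rw [h] at hu0; simp at hu0
  rw [arcsine_integral u hu0' hu1]
  have hu2 : u ^ 2 < 1 := by nlinarith [sq_abs u, abs_nonneg u]
  have hb : (0:ℝ) < Real.sqrt (1 - u ^ 2) := Real.sqrt_pos.mpr (by linarith)
  field_simp
  ring
end

section
/- Let c > 0, let z be a nonzero complex number, and let y₀ be a real number with 1 + y₀ > 0 satisfying the cubic equation y₀³ − (((1−c)² − z²)/z²) y₀² − (4/z²) y₀ − 4/z² = 0. Let s = √(1+y₀) (the positive real square root), let ε ∈ {+1, −1}, and let w be any complex number with w² = ((1−c)/z − ε/s)² − y₀²/(1+y₀). Then m = ((1−c)/z + ε s + w)/(2c) satisfies the quartic equation (1 − c² m²)(c + c z m − 1)² = 1. In particular each of the four expressions m₁(z), m₂(z), m₃(z), m₄(z) obtained from the four choices of signs is a root of (1 − c² m²)(c + c z m − 1)² = 1. -/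
/-- If `y₀` is a real root (with `1 + y₀ > 0`) of the cubic
`y³ − ((1−c)² − z²)/z² · y² − (4/z²) y − 4/z² = 0` and
`m = ((1−c)/z + ε √(1+y₀) + w)/(2c)` where `ε = ±1` and
`w² = ((1−c)/z − ε/√(1+y₀))² − y₀²/(1+y₀)`, then `m` satisfies
`(1 − c² m²)(c + czm − 1)² = 1`.  In particular each of the four expressions
`m₁, m₂, m₃, m₄` is a root of this quartic. -/
theorem four_roots_of_quartic (c : ℝ) (hc : 0 < c) (z : ℂ) (hz : z ≠ 0)
    (y₀ : ℝ) (hy₀ : 0 < 1 + y₀)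
    (hcubic : (y₀ : ℂ) ^ 3 - ((((1 : ℂ) - c) ^ 2 - z ^ 2) / z ^ 2) * (y₀ : ℂ) ^ 2
        - (4 / z ^ 2) * (y₀ : ℂ) - 4 / z ^ 2 = 0)
    (ε : ℝ) (hε : ε = 1 ∨ ε = -1)
    (w : ℂ)
    (hw : w ^ 2 = (((1 : ℂ) - c) / z - (ε : ℂ) / (Real.sqrt (1 + y₀) : ℂ)) ^ 2
        - (y₀ : ℂ) ^ 2 / ((1 : ℂ) + (y₀ : ℂ)))
    (m : ℂ)
    (hm : m = (((1 : ℂ) - c) / z + (ε : ℂ) * (Real.sqrt (1 + y₀) : ℂ) + w) / (2 * c)) :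
    (1 - (c : ℂ) ^ 2 * m ^ 2) * ((c : ℂ) + (c : ℂ) * z * m - 1) ^ 2 = 1 := by
  set S : ℂ := ((Real.sqrt (1 + y₀) : ℝ) : ℂ) with hSdef
  have hs2 : S ^ 2 = 1 + (y₀ : ℂ) := by
    rw [hSdef]; norm_cast; rw [Real.sq_sqrt hy₀.le]
  have hSne : S ≠ 0 := by
    rw [hSdef]; norm_cast
    exact ne_of_gt (Real.sqrt_pos.mpr hy₀)
  have hune : (1 : ℂ) + (y₀ : ℂ) ≠ 0 := by
    have : ((1 + y₀ : ℝ) : ℂ) ≠ 0 := by exact_mod_cast hy₀.ne'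
    push_cast at this; exact this
  have hcne : (c : ℂ) ≠ 0 := by exact_mod_cast hc.ne'
  have hε2 : (ε : ℂ) ^ 2 = 1 := by rcases hε with h | h <;> rw [h] <;> norm_num
  have hweq : w = 2 * (c : ℂ) * m - ((1 : ℂ) - c) / z - (ε : ℂ) * S := by
    rw [hm]; field_simp; ring
  rw [hweq] at hw
  field_simp at hw hcubic
  -- abbreviations (as plain terms)
  -- A = 1 - c, u = 1 + y₀
  -- X = 2*S*z*((1-c)*(2+y₀) - 2*(1+y₀)*c*m*z), Y = -2*(1+y₀)*z*(2*c^2*m^2*z - 2*c*m*(1-c) + y₀*z)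
  have hE : (ε : ℂ) * (2*S*z*((1-(c:ℂ))*(2+(y₀:ℂ)) - 2*(1+(y₀:ℂ))*c*m*z)) * (z^2*(1+(y₀:ℂ)))
      = (-2*(1+(y₀:ℂ))*z*(2*(c:ℂ)^2*m^2*z - 2*c*m*(1-(c:ℂ)) + (y₀:ℂ)*z)) * (z^2*(1+(y₀:ℂ))) := by
    have hy : (y₀:ℂ) = S^2 - 1 := by linear_combination -hs2
    rw [hy] at hw ⊢
    rcases hε with h | h <;> subst h <;> push_cast at hw ⊢ <;> linear_combination z^2*hw
  have hP : ((2*S*z*((1-(c:ℂ))*(2+(y₀:ℂ)) - 2*(1+(y₀:ℂ))*c*m*z)) * (z^2*(1+(y₀:ℂ))))^2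
      = ((-2*(1+(y₀:ℂ))*z*(2*(c:ℂ)^2*m^2*z - 2*c*m*(1-(c:ℂ)) + (y₀:ℂ)*z)) * (z^2*(1+(y₀:ℂ))))^2 := by
    linear_combination
      ((ε:ℂ) * (2*S*z*((1-(c:ℂ))*(2+(y₀:ℂ)) - 2*(1+(y₀:ℂ))*c*m*z)) * (z^2*(1+(y₀:ℂ)))
        + (-2*(1+(y₀:ℂ))*z*(2*(c:ℂ)^2*m^2*z - 2*c*m*(1-(c:ℂ)) + (y₀:ℂ)*z)) * (z^2*(1+(y₀:ℂ)))) * hE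
      - ((2*S*z*((1-(c:ℂ))*(2+(y₀:ℂ)) - 2*(1+(y₀:ℂ))*c*m*z)) * (z^2*(1+(y₀:ℂ))))^2 * hε2
  have hP2 : 4*(1+(y₀:ℂ))*z^2*((1-(c:ℂ))*(2+(y₀:ℂ)) - 2*(1+(y₀:ℂ))*c*m*z)^2 * (z^2*(1+(y₀:ℂ)))^2
      = ((-2*(1+(y₀:ℂ))*z*(2*(c:ℂ)^2*m^2*z - 2*c*m*(1-(c:ℂ)) + (y₀:ℂ)*z)) * (z^2*(1+(y₀:ℂ))))^2 := by
    linear_combination hP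
      - 4*z^2*((1-(c:ℂ))*(2+(y₀:ℂ)) - 2*(1+(y₀:ℂ))*c*m*z)^2 * (z^2*(1+(y₀:ℂ)))^2 * hs2
  have h5 : 16*(1+(y₀:ℂ))^2*z^2 * (z^2*(1+(y₀:ℂ)))^2 *
      ((1 - (c:ℂ)^2*m^2) * ((c:ℂ) + (c:ℂ)*z*m - 1)^2 - 1) = 0 := by
    linear_combination hP2 + 4*(1+(y₀:ℂ))*z^2*(z^2*(1+(y₀:ℂ)))^2 * hcubic
  have hFne : (16*(1+(y₀:ℂ))^2*z^2 * (z^2*(1+(y₀:ℂ)))^2 : ℂ) ≠ 0 := by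
    apply mul_ne_zero; apply mul_ne_zero; apply mul_ne_zero
    · norm_num
    · exact pow_ne_zero _ hune
    · exact pow_ne_zero _ hz
    · exact pow_ne_zero _ (mul_ne_zero (pow_ne_zero _ hz) hune)
  have h6 := (mul_eq_zero.mp h5).resolve_left hFne
  linear_combination h6
end

section
/- Let c > 0 with c ≠ 1. If c < 1, then the equation ((1−c)² − 1) y³ + y² + y − 1 = 0 has exactly one real solution y₁ with y₁ > 1; if c > 1, then this equation has exactly one real solution y₁ with 0 < y₁ < 1. -/
/-- Uniqueness on (1,∞). -/
lemma uniq_gt_one (c y z : ℝ) (hy : 1 < y) (hz : 1 < z)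
    (hpy : ((1 - c) ^ 2 - 1) * y ^ 3 + y ^ 2 + y - 1 = 0)
    (hpz : ((1 - c) ^ 2 - 1) * z ^ 3 + z ^ 2 + z - 1 = 0) : y = z := by
  have key : (z - y) * (y^2*z^2 + y*z*(y+z) - (y^2 + y*z + z^2)) = 0 := by
    linear_combination z^3 * hpy - y^3 * hpz
  have hQ : y^2*z^2 + y*z*(y+z) - (y^2 + y*z + z^2) > 0 := by
    nlinarith [mul_pos (sub_pos.2 hy) (sub_pos.2 hz), sq_nonneg (y-z),
      mul_pos (mul_pos (sub_pos.2 hy) (sub_pos.2 hz)) (mul_pos (lt_trans one_pos hy) (lt_trans one_pos hz))]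
  have := mul_eq_zero.1 key
  rcases this with h | h
  · linarith
  · linarith

/-- Uniqueness on (0,1). -/
lemma uniq_in_unit (c y z : ℝ) (hy0 : 0 < y) (hy1 : y < 1) (hz0 : 0 < z) (hz1 : z < 1)
    (hpy : ((1 - c) ^ 2 - 1) * y ^ 3 + y ^ 2 + y - 1 = 0)
    (hpz : ((1 - c) ^ 2 - 1) * z ^ 3 + z ^ 2 + z - 1 = 0) : y = z := by
  have key : (z - y) * (y^2*z^2 + y*z*(y+z) - (y^2 + y*z + z^2)) = 0 := by
    linear_combination z^3 * hpy - y^3 * hpz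
  have hyz1 : y * z < 1 := by nlinarith
  have hQ : y^2*z^2 + y*z*(y+z) - (y^2 + y*z + z^2) < 0 := by
    nlinarith [mul_pos (mul_pos hy0 hy0) (sub_pos.2 hz1),
      mul_pos (mul_pos hz0 hz0) (sub_pos.2 hy1),
      mul_pos (mul_pos hy0 hz0) (sub_pos.2 hyz1)]
  have := mul_eq_zero.1 key
  rcases this with h | h
  · linarith
  · linarith

/-- For `c > 0`, `c ≠ 1`: if `c < 1` the cubic
`((1−c)² − 1) y³ + y² + y − 1 = 0` has exactly one real root `y₁ > 1`, and if
`c > 1` it has exactly one real root `y₁ ∈ (0,1)`. -/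
theorem cubic_unique_root (c : ℝ) (hc : 0 < c) (hc1 : c ≠ 1) :
    (c < 1 → ∃! y : ℝ, 1 < y ∧
      ((1 - c) ^ 2 - 1) * y ^ 3 + y ^ 2 + y - 1 = 0) ∧
    (1 < c → ∃! y : ℝ, (0 < y ∧ y < 1) ∧
      ((1 - c) ^ 2 - 1) * y ^ 3 + y ^ 2 + y - 1 = 0) := by
  set f : ℝ → ℝ := fun y => ((1 - c) ^ 2 - 1) * y ^ 3 + y ^ 2 + y - 1 with hf
  have hcont : Continuous f := by fun_prop
  have hf1 : f 1 = (1 - c)^2 := by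
    show ((1 - c) ^ 2 - 1) * 1 ^ 3 + 1 ^ 2 + 1 - 1 = (1 - c)^2
    ring
  have hf1pos : 0 < f 1 := by
    rw [hf1]
    have hne : (1:ℝ) - c ≠ 0 := sub_ne_zero.2 (Ne.symm hc1)
    positivity
  constructor
  · intro hlt
    -- existence: f 1 > 0, f (3/c) < 0
    have hb : (1:ℝ) < 3 / c := by
      rw [lt_div_iff₀ hc]; linarith
    have hfb : f (3/c) < 0 := by
      have h1 : f (3/c) = ((1 - c) ^ 2 - 1) * (3/c)^3 + (3/c)^2 + (3/c) - 1 := rfl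
      rw [h1]
      have hc3 : (0:ℝ) < c^3 := by positivity
      rw [div_pow, div_pow]
      have : ((1 - c) ^ 2 - 1) * (3 ^ 3 / c ^ 3) + 3 ^ 2 / c ^ 2 + 3 / c - 1
          = ((c^2 - 2*c) * 27 + 9*c + 3*c^2 - c^3) / c^3 := by
        field_simp; ring
      rw [this]
      apply div_neg_of_neg_of_pos _ hc3
      nlinarith [sq_nonneg c, hc, hlt]
    obtain ⟨y, hyIcc, hyz⟩ := intermediate_value_Icc' hb.le hcont.continuousOn
      (show (0:ℝ) ∈ Set.Icc (f (3/c)) (f 1) from ⟨hfb.le, hf1pos.le⟩)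
    have hy1 : 1 < y := by
      rcases lt_or_eq_of_le hyIcc.1 with h | h
      · exact h
      · exfalso; rw [← h] at hyz; linarith
    refine ⟨y, ⟨hy1, hyz⟩, ?_⟩
    rintro z ⟨hz1, hzz⟩
    exact uniq_gt_one c z y hz1 hy1 hzz hyz
  · intro hgt
    have hf0 : f 0 < 0 := by simp [hf]
    obtain ⟨y, hyIcc, hyz⟩ := intermediate_value_Icc (show (0:ℝ) ≤ 1 by norm_num) hcont.continuousOn
      (show (0:ℝ) ∈ Set.Icc (f 0) (f 1) from ⟨hf0.le, hf1pos.le⟩)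
    have hy0 : 0 < y := by
      rcases lt_or_eq_of_le hyIcc.1 with h | h
      · exact h
      · exfalso; rw [← h] at hyz; linarith
    have hy1 : y < 1 := by
      rcases lt_or_eq_of_le hyIcc.2 with h | h
      · exact h
      · exfalso; rw [h] at hyz; linarith
    refine ⟨y, ⟨⟨hy0, hy1⟩, hyz⟩, ?_⟩
    rintro z ⟨⟨hz0, hz1⟩, hzz⟩
    exact uniq_in_unit c z y hz0 hz1 hy0 hy1 hzz hyz
end

section
/- Let S and T be n×n complex matrices such that S is Hermitian positive semidefinite and T is Hermitian. Then every eigenvalue of the (in general non-Hermitian) product matrix S T is real; that is, every root of the characteristic polynomial det(λ I_n − S T) in ℂ is a real number. -/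
open Matrix ComplexOrder
open scoped MatrixOrder

lemma herm_root_real_aux {n : ℕ} {H : Matrix (Fin n) (Fin n) ℂ} (hH : H.IsHermitian)
    (μ : ℂ) (h : (μ • (1 : Matrix (Fin n) (Fin n) ℂ) - H).det = 0) : ∃ r : ℝ, μ = (r : ℂ) := by
  classical
  set U := (hH.eigenvectorUnitary : Matrix (Fin n) (Fin n) ℂ) with hUdef
  have hU : U * star U = 1 := (Matrix.mem_unitaryGroup_iff).mp hH.eigenvectorUnitary.2
  have key : μ • (1 : Matrix (Fin n) (Fin n) ℂ) - H
      = U * (μ • 1 - Matrix.diagonal (Complex.ofReal ∘ hH.eigenvalues)) * star U := by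
    rw [Matrix.mul_sub, Matrix.sub_mul]
    congr 1
    · rw [mul_smul_comm, smul_mul_assoc, Matrix.mul_one, hU]
    · exact hH.spectral_theorem
  have hdetU : U.det * (star U).det = 1 := by
    rw [← Matrix.det_mul, hU, Matrix.det_one]
  rw [key, Matrix.det_mul, Matrix.det_mul] at h
  have h2 : (μ • (1 : Matrix (Fin n) (Fin n) ℂ)
      - Matrix.diagonal (Complex.ofReal ∘ hH.eigenvalues)).det = 0 := by
    by_contra hne
    have := mul_ne_zero (mul_ne_zero (left_ne_zero_of_mul_eq_one hdetU) hne)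
      (right_ne_zero_of_mul_eq_one hdetU)
    exact this h
  have h3 : μ • (1 : Matrix (Fin n) (Fin n) ℂ)
      - Matrix.diagonal (Complex.ofReal ∘ hH.eigenvalues)
      = Matrix.diagonal (fun i => μ - (hH.eigenvalues i : ℂ)) := by
    rw [Matrix.smul_one_eq_diagonal, Matrix.diagonal_sub]
    rfl
  rw [h3, Matrix.det_diagonal] at h2
  obtain ⟨i, hi⟩ := Finset.prod_eq_zero_iff.mp h2
  exact ⟨hH.eigenvalues i, by linear_combination hi.2⟩

/-- If `S` is Hermitian positive semidefinite and `T` is Hermitian,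
then every eigenvalue of the (generally non-Hermitian) product `S * T` is real:
every complex root of `det(λ I − S T)` is real. -/
theorem eigenvalues_product_psd_hermitian_real {n : ℕ}
    (S T : Matrix (Fin n) (Fin n) ℂ)
    (hS : S.PosSemidef) (hT : T.IsHermitian) :
    ∀ μ : ℂ, (μ • (1 : Matrix (Fin n) (Fin n) ℂ) - S * T).det = 0 → ∃ r : ℝ, μ = (r : ℂ) := by
  intro μ hμ
  rcases eq_or_ne μ 0 with rfl | hμ0
  · exact ⟨0, by simp⟩
  set R := CFC.sqrt S with hRdef
  have hR : R.IsHermitian := (CFC.sqrt_nonneg S).posSemidef.isHermitian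
  have hRTR : (R * T * R).IsHermitian := by
    unfold Matrix.IsHermitian
    rw [Matrix.conjTranspose_mul, Matrix.conjTranspose_mul, hR.eq, hT.eq, Matrix.mul_assoc]
  have hsplit : ∀ M : Matrix (Fin n) (Fin n) ℂ,
      μ • (1 : Matrix (Fin n) (Fin n) ℂ) - M = μ • ((1 : Matrix (Fin n) (Fin n) ℂ) + (-μ⁻¹) • M) := by
    intro M
    rw [smul_add, smul_smul, mul_neg, mul_inv_cancel₀ hμ0]
    simp [sub_eq_add_neg]
  have h1 : (μ • (1 : Matrix (Fin n) (Fin n) ℂ) - S * T).det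
      = μ ^ n * ((1 : Matrix (Fin n) (Fin n) ℂ) + R * ((-μ⁻¹) • (R * T))).det := by
    rw [hsplit, Matrix.det_smul]
    congr 3
    · simp [Fintype.card_fin]
    · rw [mul_smul_comm, ← Matrix.mul_assoc, CFC.sqrt_mul_sqrt_self S hS.nonneg]
  have h2 : ((1 : Matrix (Fin n) (Fin n) ℂ) + R * ((-μ⁻¹) • (R * T))).det = 0 := by
    have := h1 ▸ hμ
    exact (mul_eq_zero.mp this).resolve_left (pow_ne_zero n hμ0)
  rw [Matrix.det_one_add_mul_comm] at h2
  have h3 : (μ • (1 : Matrix (Fin n) (Fin n) ℂ) - R * T * R).det = 0 := by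
    rw [hsplit, Matrix.det_smul, Fintype.card_fin]
    have : (1 : Matrix (Fin n) (Fin n) ℂ) + (-μ⁻¹) • (R * T * R)
        = 1 + ((-μ⁻¹) • (R * T)) * R := by
      rw [smul_mul_assoc]
    rw [this, h2, mul_zero]
  exact herm_root_real_aux hRTR μ h3
end
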